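/- If ε = −1 (the Borisov–Fedorov case, rolling of a spherical shell over a fixed sphere with R₂ = 2R₁), then along any solution of the Chaplygin ball system the function F̃₄(t) = (I₂ + I₃ − I₁ + D)·G₁(t)γ₁(t) + (I₃ + I₁ − I₂ + D)·G₂(t)γ₂(t) + (I₁ + I₂ − I₃ + D)·G₃(t)γ₃(t) is constant in t, where G = (G₁, G₂, G₃) and γ = (γ₁, γ₂, γ₃). -/

import Mathlib

open Matrix

/-- If `ε = −1` (the Borisov–Fedorov case), then along any solution of the Chaplygin
ball system the function
`F̃₄ = (I₂+I₃−I₁+D)G₁γ₁ + (I₃+I₁−I₂+D)G₂γ₂ + (I₁+I₂−I₃+D)G₃γ₃` is constant. -/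
theorem chaplygin_ball_borisov_fedorov_integral
    (I₁ I₂ I₃ D ε : ℝ) (hI₁ : 0 < I₁) (hI₂ : 0 < I₂) (hI₃ : 0 < I₃) (hD : 0 < D)
    (hε : ε = -1)
    (ω γ : ℝ → Fin 3 → ℝ) (hω : Differentiable ℝ ω) (hγ : Differentiable ℝ γ)
    (G : ℝ → Fin 3 → ℝ)
    (hG : ∀ t, G t =
      (Matrix.diagonal ![I₁, I₂, I₃] + D • (1 : Matrix (Fin 3) (Fin 3) ℝ)) *ᵥ ω t
        - (D * (ω t ⬝ᵥ γ t)) • γ t)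
    (heqG : ∀ t, HasDerivAt G (G t ⨯₃ ω t) t)
    (heqγ : ∀ t, HasDerivAt γ (ε • (γ t ⨯₃ ω t)) t) :
    ∀ t₁ t₂ : ℝ,
      (I₂ + I₃ - I₁ + D) * G t₁ 0 * γ t₁ 0 + (I₃ + I₁ - I₂ + D) * G t₁ 1 * γ t₁ 1
        + (I₁ + I₂ - I₃ + D) * G t₁ 2 * γ t₁ 2
      = (I₂ + I₃ - I₁ + D) * G t₂ 0 * γ t₂ 0 + (I₃ + I₁ - I₂ + D) * G t₂ 1 * γ t₂ 1
        + (I₁ + I₂ - I₃ + D) * G t₂ 2 * γ t₂ 2 := by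
  intro t₁ t₂
  subst hε
  set f : ℝ → ℝ := fun t =>
    (I₂ + I₃ - I₁ + D) * G t 0 * γ t 0 + (I₃ + I₁ - I₂ + D) * G t 1 * γ t 1
      + (I₁ + I₂ - I₃ + D) * G t 2 * γ t 2 with hf
  have hGc : ∀ t (i : Fin 3), HasDerivAt (fun t => G t i) ((G t ⨯₃ ω t) i) t :=
    fun t i => (hasDerivAt_pi.mp (heqG t)) i
  have hγc : ∀ t (i : Fin 3), HasDerivAt (fun t => γ t i) (((-1 : ℝ) • (γ t ⨯₃ ω t)) i) t :=
    fun t i => (hasDerivAt_pi.mp (heqγ t)) i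
  have key : ∀ t, HasDerivAt f 0 t := by
    intro t
    have h :=
      ((((hGc t 0).mul (hγc t 0)).const_mul (I₂ + I₃ - I₁ + D)).add
        (((hGc t 1).mul (hγc t 1)).const_mul (I₃ + I₁ - I₂ + D))).add
        (((hGc t 2).mul (hγc t 2)).const_mul (I₁ + I₂ - I₃ + D))
    have harr : (fun t => (I₂ + I₃ - I₁ + D) * (G t 0 * γ t 0)
        + (I₃ + I₁ - I₂ + D) * (G t 1 * γ t 1)
        + (I₁ + I₂ - I₃ + D) * (G t 2 * γ t 2)) = f := by
      funext s; simp [hf]; ring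
    simp only [Pi.add_def, Pi.mul_apply] at h
    rw [harr] at h
    refine h.congr_deriv ?_
    have hGt := hG t
    have h0 := congrFun hGt 0
    have h1 := congrFun hGt 1
    have h2 := congrFun hGt 2
    simp [Matrix.mulVec, dotProduct, Fin.sum_univ_three, Matrix.diagonal,
      Matrix.one_apply, Matrix.add_apply, Matrix.smul_apply] at h0 h1 h2
    simp only [cross_apply, LinearMap.mk₂_apply, Pi.smul_apply, smul_eq_mul,
      Matrix.cons_val_zero, Matrix.cons_val_one, Matrix.head_cons,
      Matrix.cons_val_two, Matrix.tail_cons]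
    rw [h0, h1, h2]
    ring
  exact (is_const_of_deriv_eq_zero (fun t => (key t).differentiableAt)
    (fun t => (key t).deriv) t₁ t₂)
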